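/- Let ξ be an exponential random variable with rate 1, and let ρ, a, δ > 0 and p ≥ 0 satisfy p < (δ+a)(1−ρ). Then E[(ξ+a)^p e^{ρξ} 1_{ξ ≥ δ}] ≤ (1 − ρ − p/(a+δ))^{−1} (δ+a)^p e^{−δ(1−ρ)}. -/

import Mathlib

open MeasureTheory
open scoped ENNReal NNReal

theorem exponential_poly_exp_tail_bound
    {Ω : Type*} [MeasurableSpace Ω] (P : Measure Ω) [IsProbabilityMeasure P]
    (ξ : Ω → ℝ) (hmeas : Measurable ξ) (hξ0 : ∀ ω, 0 ≤ ξ ω)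
    (hexp : ∀ t : ℝ, 0 ≤ t → P {ω | t < ξ ω} = ENNReal.ofReal (Real.exp (-t)))
    (ρ a δ p : ℝ) (hρ : 0 < ρ) (ha : 0 < a) (hδ : 0 < δ) (hp : 0 ≤ p)
    (hlt : p < (δ + a) * (1 - ρ)) :
    ∫ ω, Set.indicator {ω | δ ≤ ξ ω}
        (fun ω => (ξ ω + a) ^ p * Real.exp (ρ * ξ ω)) ω ∂P
      ≤ (1 - ρ - p / (a + δ))⁻¹ * (δ + a) ^ p * Real.exp (-δ * (1 - ρ)) := by
  have hda : (0:ℝ) < δ + a := by linarith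
  set c : ℝ := p / (δ + a) with hc
  have hcnn : 0 ≤ c := div_nonneg hp hda.le
  have hclt : c < 1 - ρ := (div_lt_iff₀ hda).mpr (by linarith)
  set b : ℝ := 1 - ρ - c with hbdef
  have hb : 0 < b := by rw [hbdef]; linarith
  set f : ℝ → ℝ := fun x => (x + a) ^ p * Real.exp (ρ * x) with hf
  set F : ℝ → ℝ := Set.indicator (Set.Ici δ) f with hF
  have hfmeas : Measurable f := by fun_prop
  have hFmeas : Measurable F := hfmeas.indicator measurableSet_Ici
  have hrw : ∀ ω, Set.indicator {ω | δ ≤ ξ ω}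
      (fun ω => (ξ ω + a) ^ p * Real.exp (ρ * ξ ω)) ω = F (ξ ω) := by
    intro ω
    by_cases h : δ ≤ ξ ω
    · simp [hF, hf, Set.indicator_apply, h]
    · simp [hF, hf, Set.indicator_apply, h]
  set ν : Measure ℝ :=
    (volume.restrict (Set.Ioi 0)).withDensity
      (fun x => ENNReal.ofReal (Real.exp (-x))) with hν
  haveI hmapfin : IsProbabilityMeasure (P.map ξ) :=
    Measure.isProbabilityMeasure_map hmeas.aemeasurable
  have hmap : P.map ξ = ν := by
    refine Measure.ext_of_Iic (P.map ξ) ν (fun t => ?_)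
    rw [Measure.map_apply hmeas measurableSet_Iic, hν,
        withDensity_apply _ measurableSet_Iic,
        Measure.restrict_restrict measurableSet_Iic]
    have hIic : Set.Iic t ∩ Set.Ioi 0 = Set.Ioc 0 t := by
      ext x; simp [Set.mem_Ioc, and_comm]
    rw [hIic]
    rcases le_or_gt 0 t with ht | ht
    · have hpre : ξ ⁻¹' Set.Iic t = {ω | t < ξ ω}ᶜ := by
        ext ω; simp [not_lt]
      rw [hpre, prob_compl_eq_one_sub (measurableSet_lt measurable_const hmeas),
          hexp t ht]
      have hint : IntegrableOn (fun x => Real.exp (-x)) (Set.Ioc 0 t) :=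
        (intervalIntegrable_iff_integrableOn_Ioc_of_le ht).mp
          ((Real.continuous_exp.comp continuous_neg).intervalIntegrable 0 t)
      rw [← ofReal_integral_eq_lintegral_ofReal hint
          (Filter.Eventually.of_forall fun x => (Real.exp_pos _).le),
          ← intervalIntegral.integral_of_le ht]
      have hval : ∫ x in (0:ℝ)..t, Real.exp (-x) = 1 - Real.exp (-t) := by
        rw [intervalIntegral.integral_comp_neg fun x => Real.exp x, integral_exp]
        simp
      rw [hval, ENNReal.ofReal_sub 1 (Real.exp_pos _).le, ENNReal.ofReal_one]
    · have h1 : ξ ⁻¹' Set.Iic t = ∅ := by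
        refine Set.eq_empty_of_forall_notMem fun ω hω => ?_
        simp only [Set.mem_preimage, Set.mem_Iic] at hω
        linarith [hξ0 ω]
      rw [h1, Set.Ioc_eq_empty (by linarith), measure_empty,
          Measure.restrict_empty, lintegral_zero_measure]
  have h1 : ∫ ω, F (ξ ω) ∂P = ∫ x, F x ∂ν := by
    rw [← hmap, integral_map hmeas.aemeasurable hFmeas.aestronglyMeasurable]
  have h2 : ∫ x, F x ∂ν = ∫ x in Set.Ioi (0:ℝ), Real.exp (-x) * F x := by
    have hrfl : ν = (volume.restrict (Set.Ioi 0)).withDensity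
        (fun x => ((Real.exp (-x)).toNNReal : ℝ≥0∞)) := rfl
    have hm : Measurable fun x : ℝ => (Real.exp (-x)).toNNReal := by fun_prop
    rw [hrfl, integral_withDensity_eq_integral_smul hm F]
    refine integral_congr_ae (Filter.Eventually.of_forall fun x => ?_)
    simp [NNReal.smul_def, Real.coe_toNNReal _ (Real.exp_pos _).le]
  set K : ℝ := (δ + a) ^ p * Real.exp (-(c * δ)) with hK
  set G : ℝ → ℝ := Set.indicator (Set.Ioi δ) (fun x => K * Real.exp (-(b * x))) with hG
  have hGint : Integrable G (volume.restrict (Set.Ioi 0)) := by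
    rw [hG, integrable_indicator_iff measurableSet_Ioi]
    have : IntegrableOn (fun x => K * Real.exp (-(b * x))) (Set.Ioi δ) volume := by
      have := (exp_neg_integrableOn_Ioi δ hb).const_mul K
      exact (by simpa [neg_mul] using this : Integrable (fun x => K * Real.exp (-(b * x))) (volume.restrict (Set.Ioi δ)))
    rw [IntegrableOn, Measure.restrict_restrict measurableSet_Ioi,
        Set.inter_eq_left.mpr (Set.Ioi_subset_Ioi hδ.le)]
    exact this
  have hnn : 0 ≤ᵐ[volume.restrict (Set.Ioi (0:ℝ))] fun x => Real.exp (-x) * F x := by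
    refine Filter.Eventually.of_forall fun x => ?_
    have hFnn : 0 ≤ F x := by
      rw [hF]
      refine Set.indicator_nonneg (fun y hy => ?_) x
      have hy' : (0:ℝ) ≤ y + a := by
        have : δ ≤ y := hy
        linarith
      exact mul_nonneg (Real.rpow_nonneg hy' p) (Real.exp_pos _).le
    exact mul_nonneg (Real.exp_pos _).le hFnn
  have hle : (fun x => Real.exp (-x) * F x) ≤ᵐ[volume.restrict (Set.Ioi (0:ℝ))] G := by
    have hδae : ∀ᵐ (x:ℝ) ∂(volume.restrict (Set.Ioi (0:ℝ))), x ≠ δ := by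
      refine ae_restrict_of_ae ?_
      refine ae_iff.mpr ?_
      simpa using measure_singleton δ
    filter_upwards [hδae] with x hxδ
    rcases lt_trichotomy x δ with h | h | h
    · have hx1 : x ∉ Set.Ici δ := by simp [not_le.mpr h]
      have hx2 : x ∉ Set.Ioi δ := by simp [not_lt.mpr h.le]
      simp [hF, hG, Set.indicator_of_notMem, hx1, hx2]
    · exact absurd h hxδ
    · have hxi : x ∈ Set.Ici δ := h.le
      have hxo : x ∈ Set.Ioi δ := h
      rw [hF, hG, Set.indicator_of_mem hxi, Set.indicator_of_mem hxo, hf]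
      have hxa : (0:ℝ) < x + a := by linarith
      have hbase : x + a ≤ (δ + a) * Real.exp ((x - δ) / (δ + a)) := by
        have h3 := Real.add_one_le_exp ((x - δ) / (δ + a))
        have h4 := mul_le_mul_of_nonneg_left h3 hda.le
        calc x + a = (δ + a) * ((x - δ) / (δ + a) + 1) := by
              field_simp
              ring
          _ ≤ (δ + a) * Real.exp ((x - δ) / (δ + a)) := h4
      have hpow : (x + a) ^ p ≤ (δ + a) ^ p * Real.exp (c * (x - δ)) := by
        calc (x + a) ^ p ≤ ((δ + a) * Real.exp ((x - δ) / (δ + a))) ^ p :=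
              Real.rpow_le_rpow hxa.le hbase hp
          _ = (δ + a) ^ p * Real.exp ((x - δ) / (δ + a)) ^ p :=
              Real.mul_rpow hda.le (Real.exp_pos _).le
          _ = (δ + a) ^ p * Real.exp (c * (x - δ)) := by
              rw [← Real.exp_mul]
              congr 1
              rw [hc]
              field_simp
      have hexpid : Real.exp (-x) * Real.exp (c * (x - δ)) * Real.exp (ρ * x)
          = Real.exp (-(c * δ)) * Real.exp (-(b * x)) := by
        rw [← Real.exp_add, ← Real.exp_add, ← Real.exp_add]
        congr 1
        rw [hbdef]
        ring
      calc Real.exp (-x) * ((x + a) ^ p * Real.exp (ρ * x))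
          ≤ Real.exp (-x) * ((δ + a) ^ p * Real.exp (c * (x - δ)) * Real.exp (ρ * x)) := by
            refine mul_le_mul_of_nonneg_left ?_ (Real.exp_pos _).le
            exact mul_le_mul_of_nonneg_right hpow (Real.exp_pos _).le
        _ = K * Real.exp (-(b * x)) := by
            rw [hK,
              show Real.exp (-x) * ((δ + a) ^ p * Real.exp (c * (x - δ)) * Real.exp (ρ * x))
                = (δ + a) ^ p * (Real.exp (-x) * Real.exp (c * (x - δ)) * Real.exp (ρ * x))
                from by ring,
              hexpid]
            ring
  have h3 : ∫ x in Set.Ioi (0:ℝ), G x = K * (b⁻¹ * Real.exp (-(b * δ))) := by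
    rw [hG, integral_indicator measurableSet_Ioi,
        Measure.restrict_restrict measurableSet_Ioi,
        Set.inter_eq_left.mpr (Set.Ioi_subset_Ioi hδ.le),
        integral_const_mul]
    congr 1
    have h5 := integral_comp_mul_left_Ioi (fun y => Real.exp (-y)) δ hb
    rw [integral_exp_neg_Ioi] at h5
    simpa [smul_eq_mul] using h5
  have hfinal : K * (b⁻¹ * Real.exp (-(b * δ)))
      = (1 - ρ - p / (a + δ))⁻¹ * (δ + a) ^ p * Real.exp (-δ * (1 - ρ)) := by
    have h4 : (1 - ρ - p / (a + δ)) = b := by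
      rw [hbdef, hc, add_comm a δ]
    have h5 : Real.exp (-(c * δ)) * Real.exp (-(b * δ)) = Real.exp (-δ * (1 - ρ)) := by
      rw [← Real.exp_add]
      congr 1
      rw [hbdef]
      ring
    rw [h4, hK,
      show (δ + a) ^ p * Real.exp (-(c * δ)) * (b⁻¹ * Real.exp (-(b * δ)))
        = b⁻¹ * (δ + a) ^ p * (Real.exp (-(c * δ)) * Real.exp (-(b * δ))) from by ring,
      h5]
  calc ∫ ω, Set.indicator {ω | δ ≤ ξ ω}
        (fun ω => (ξ ω + a) ^ p * Real.exp (ρ * ξ ω)) ω ∂P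
      = ∫ x in Set.Ioi (0:ℝ), Real.exp (-x) * F x := by
        simp only [hrw]; rw [h1, h2]
    _ ≤ ∫ x in Set.Ioi (0:ℝ), G x := integral_mono_of_nonneg hnn hGint hle
    _ = (1 - ρ - p / (a + δ))⁻¹ * (δ + a) ^ p * Real.exp (-δ * (1 - ρ)) := by
        rw [h3, hfinal]
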